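/- arXiv:1505.00321 — 6 statements merged into one kernel-verified Lean document; each statement's English description precedes it below -/
import Mathlib

section
/- Let X be a finite connected graph of genus g and let G be a finite group acting on X without invertible edges. Let the factor graph X/G have as vertices the G-orbits of V(X) and as edges the G-orbits of E(X), with genus g(X/G) = 1 − #(G-orbits on V(X)) + #(G-orbits on E(X)). Then g − 1 = |G|·(g(X/G) − 1) + Σ_{v ∈ V(X)} (|G^v| − 1) − Σ_{e ∈ E(X)} (|G^e| − 1). -/
open MulAction

theorem RH_card_subtype_sum {α : Type} [Fintype α] (p : α → Prop) [DecidablePred p] :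
    Nat.card {x // p x} = ∑ a : α, if p a then 1 else 0 := by
  rw [Nat.card_eq_fintype_card, Fintype.card_subtype, Finset.card_filter]

theorem RH_sum_stab {G α : Type} [Group G] [Fintype G] [Fintype α] [MulAction G α] :
    ∑ a : α, Nat.card (stabilizer G a)
      = Nat.card (Quotient (orbitRel G α)) * Nat.card G := by
  classical
  letI : ∀ g : G, Fintype (fixedBy α g) := fun g => Fintype.ofFinite _
  letI : Fintype (Quotient (orbitRel G α)) := Fintype.ofFinite _
  have burn := MulAction.sum_card_fixedBy_eq_card_orbits_mul_card_group G α
  calc ∑ a : α, Nat.card (stabilizer G a)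
      = ∑ a : α, ∑ g : G, (if g • a = a then 1 else 0) := by
        refine Finset.sum_congr rfl fun a _ => ?_
        rw [← RH_card_subtype_sum (fun g : G => g • a = a)]
        exact Nat.card_congr (Equiv.subtypeEquivRight fun g => mem_stabilizer_iff)
    _ = ∑ g : G, ∑ a : α, (if g • a = a then 1 else 0) := Finset.sum_comm
    _ = ∑ g : G, Fintype.card (fixedBy α g) := by
        refine Finset.sum_congr rfl fun gg _ => ?_
        rw [← RH_card_subtype_sum (fun a : α => gg • a = a), ← Nat.card_eq_fintype_card]
        exact Nat.card_congr (Equiv.subtypeEquivRight fun a => (mem_fixedBy).symm)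
    _ = Fintype.card (Quotient (orbitRel G α)) * Fintype.card G := burn
    _ = Nat.card (Quotient (orbitRel G α)) * Nat.card G := by
        rw [Nat.card_eq_fintype_card, Nat.card_eq_fintype_card]

theorem RH_card_orbitSet {G α : Type} [Group G] [MulAction G α] :
    Nat.card {s : Set α | ∃ a : α, s = orbit G a}
      = Nat.card (Quotient (orbitRel G α)) := by
  refine (Nat.card_congr (Equiv.ofBijective ?_ ⟨?_, ?_⟩)).symm
  · exact Quotient.lift (fun a => (⟨orbit G a, a, rfl⟩ : {s : Set α | ∃ a : α, s = orbit G a}))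
      (fun a b h => Subtype.ext (orbit_eq_iff.mpr ((orbitRel_apply).mp h)))
  · rintro ⟨a⟩ ⟨b⟩ h
    exact Quotient.sound ((orbitRel_apply).mpr (orbit_eq_iff.mp (congrArg Subtype.val h)))
  · rintro ⟨s, a, rfl⟩
    exact ⟨⟦a⟧, rfl⟩

theorem RH_card_orbitSet_sub {G α : Type} [Group G] [MulAction G α] (S : Set α)
    [MulAction G ↥S] (hcompat : ∀ (g : G) (a : ↥S), ((g • a : ↥S) : α) = g • (a : α)) :
    Nat.card {s : Set α | ∃ a ∈ S, s = orbit G a}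
      = Nat.card (Quotient (orbitRel G ↥S)) := by
  have key : ∀ a b : ↥S, (orbitRel G ↥S).r a b ↔ orbit G (a : α) = orbit G (b : α) := by
    intro a b
    constructor
    · intro h
      obtain ⟨g, hg⟩ := (orbitRel_apply).mp h
      refine orbit_eq_iff.mpr ⟨g, ?_⟩
      have hg' : g • b = a := hg
      show g • (b : α) = (a : α)
      rw [← hcompat g b, hg']
    · intro h
      obtain ⟨g, hg⟩ := orbit_eq_iff.mp h
      have hg' : g • (b : α) = (a : α) := hg
      refine (orbitRel_apply).mpr ⟨g, Subtype.ext ?_⟩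
      rw [hcompat g b, hg']
  refine (Nat.card_congr (Equiv.ofBijective ?_ ⟨?_, ?_⟩)).symm
  · exact Quotient.lift
      (fun a : ↥S => (⟨orbit G (a : α), a, a.2, rfl⟩ : {s : Set α | ∃ a ∈ S, s = orbit G a}))
      (fun a b h => Subtype.ext ((key a b).mp h))
  · rintro ⟨a⟩ ⟨b⟩ h
    exact Quotient.sound ((key a b).mpr (congrArg Subtype.val h))
  · rintro ⟨s, a, ha, rfl⟩
    exact ⟨⟦⟨a, ha⟩⟧, rfl⟩

/-- A finite graph `X = (D, V; I, bar)`: ... -/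
theorem riemann_hurwitz_no_invertible_edges
    {V D G : Type} [Fintype V] [Fintype D] [Nonempty V]
    [Group G] [Fintype G] [MulAction G D] [MulAction G V]
    (I : D → V) (bar : D → D)
    (hbar_invol : ∀ x : D, bar (bar x) = x)
    (hbar_nofix : ∀ x : D, bar x ≠ x)
    (hI_equiv : ∀ (g : G) (x : D), I (g • x) = g • I x)
    (hbar_equiv : ∀ (g : G) (x : D), bar (g • x) = g • bar x)
    (hfaithful : ∀ g : G, (∀ x : D, g • x = x) → (∀ v : V, g • v = v) → g = 1)
    (E : Set (Sym2 D)) (hE : E = {e : Sym2 D | ∃ x : D, e = Sym2.mk x (bar x)})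
    (hconn : ∀ u v : V, Relation.ReflTransGen
      (fun a b : V => ∃ x : D, I x = a ∧ I (bar x) = b) u v)
    (hnoinv : ∀ (x : D) (g : G), g • x ≠ bar x)
    (g gQ : ℤ)
    (hg : g = 1 - (Nat.card V : ℤ) + (Nat.card E : ℤ))
    (hgQ : gQ = 1 - (Nat.card {s : Set V | ∃ v : V, s = MulAction.orbit G v} : ℤ) + (Nat.card {s : Set (Sym2 D) | ∃ e ∈ E, s = {e' : Sym2 D | ∃ g : G, Sym2.map (fun y => g • y) e = e'}} : ℤ)) :
    g - 1 = (Nat.card G : ℤ) * (gQ - 1)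
      + (∑ᶠ v : V, ((Nat.card (MulAction.stabilizer G v) : ℤ) - 1))
      - (∑ᶠ e ∈ E, ((Nat.card {g : G | ∀ y ∈ e, g • y = y} : ℤ) - 1)) := by
  classical
  -- action of G on Sym2 D
  letI : MulAction G (Sym2 D) :=
    { smul := fun gg e => Sym2.map (fun y => gg • y) e
      one_smul := fun e => by
        induction e using Sym2.ind with
        | _ x y => show Sym2.map _ _ = _; simp [Sym2.map_pair_eq]
      mul_smul := fun g1 g2 e => by
        induction e using Sym2.ind with
        | _ x y =>
          show Sym2.map _ _ = Sym2.map _ (Sym2.map _ _)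
          simp [Sym2.map_pair_eq, mul_smul] }
  have hsmul2 : ∀ (gg : G) (e : Sym2 D), gg • e = Sym2.map (fun y => gg • y) e :=
    fun _ _ => rfl
  -- E is invariant
  have hEinv : ∀ (gg : G) (e : Sym2 D), e ∈ E → gg • e ∈ E := by
    subst hE
    rintro gg e ⟨x, rfl⟩
    exact ⟨gg • x, by rw [hsmul2, Sym2.map_pair_eq, hbar_equiv]⟩
  -- induced action on ↥E
  letI : MulAction G ↥E :=
    { smul := fun gg e => ⟨gg • (e : Sym2 D), hEinv gg e e.2⟩
      one_smul := fun e => Subtype.ext (one_smul G (e : Sym2 D))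
      mul_smul := fun g1 g2 e => Subtype.ext (mul_smul g1 g2 (e : Sym2 D)) }
  have hcompat : ∀ (gg : G) (e : ↥E), ((gg • e : ↥E) : Sym2 D) = gg • (e : Sym2 D) :=
    fun _ _ => rfl
  letI : Fintype ↥E := Fintype.ofFinite _
  -- pointwise stabiliser equals action stabiliser
  have hstab : ∀ e : ↥E,
      Nat.card (stabilizer G e) = Nat.card {gg : G | ∀ y ∈ (e : Sym2 D), gg • y = y} := by
    intro e
    refine Nat.card_congr (Equiv.subtypeEquivRight fun gg => ?_)
    obtain ⟨q, hq⟩ := e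
    obtain ⟨x, rfl⟩ : ∃ x : D, q = Sym2.mk x (bar x) := by rw [hE] at hq; exact hq
    constructor
    · intro h
      have h2 : Sym2.mk (gg • x) (gg • bar x) = Sym2.mk x (bar x) := by
        have := congrArg Subtype.val h
        rwa [hcompat, hsmul2, Sym2.map_pair_eq] at this
      rcases Sym2.eq_iff.mp h2 with ⟨h3, h4⟩ | ⟨h3, _⟩
      · intro y hy
        rcases Sym2.mem_iff.mp hy with rfl | rfl
        · exact h3
        · exact h4
      · exact absurd h3 (hnoinv x gg)
    · intro h
      refine Subtype.ext ?_
      show gg • (Sym2.mk x (bar x)) = Sym2.mk x (bar x)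
      rw [hsmul2, Sym2.map_pair_eq]
      rw [h x (Sym2.mem_iff.mpr (Or.inl rfl)), h (bar x) (Sym2.mem_iff.mpr (Or.inr rfl))]
  -- the orbit set of hgQ equals the orbit set of the action
  have horbset : {s : Set (Sym2 D) | ∃ e ∈ E, s = {e' : Sym2 D | ∃ g : G, Sym2.map (fun y => g • y) e = e'}}
      = {s : Set (Sym2 D) | ∃ e ∈ E, s = orbit G e} := by
    have : ∀ e : Sym2 D, {e' : Sym2 D | ∃ g : G, Sym2.map (fun y => g • y) e = e'} = orbit G e :=
      fun e => Set.ext fun e' => Iff.symm mem_orbit_iff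
    simp_rw [this]
  -- main counting facts
  have hVsum : (∑ v : V, Nat.card (stabilizer G v))
      = Nat.card {s : Set V | ∃ v : V, s = orbit G v} * Nat.card G := by
    rw [RH_sum_stab, RH_card_orbitSet]
  have hEsum : (∑ e : ↥E, Nat.card (stabilizer G e))
      = Nat.card {s : Set (Sym2 D) | ∃ e ∈ E, s = orbit G e} * Nat.card G := by
    rw [RH_sum_stab, RH_card_orbitSet_sub E hcompat]
  -- finsum over vertices
  have hfsV : (∑ᶠ v : V, ((Nat.card (stabilizer G v) : ℤ) - 1))
      = (Nat.card {s : Set V | ∃ v : V, s = orbit G v} : ℤ) * Nat.card G - Nat.card V := by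
    rw [finsum_eq_sum_of_fintype, Finset.sum_sub_distrib, Finset.sum_const, Finset.card_univ,
      ← Nat.cast_sum, hVsum]
    simp only [Nat.card_eq_fintype_card]
    push_cast
    ring
  -- finsum over edges
  have hfsE : (∑ᶠ e ∈ E, ((Nat.card {gg : G | ∀ y ∈ e, gg • y = y} : ℤ) - 1))
      = (Nat.card {s : Set (Sym2 D) | ∃ e ∈ E, s = {e' : Sym2 D | ∃ g : G, Sym2.map (fun y => g • y) e = e'}} : ℤ) * Nat.card G - Nat.card ↥E := by
    have hfin : E.Finite := Set.toFinite E
    rw [finsum_mem_eq_finite_toFinset_sum _ hfin]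
    rw [Finset.sum_subtype hfin.toFinset (fun x => hfin.mem_toFinset)
      (fun e => ((Nat.card {gg : G | ∀ y ∈ e, gg • y = y} : ℤ) - 1))]
    have : ∀ e : ↥E, ((Nat.card {gg : G | ∀ y ∈ (e : Sym2 D), gg • y = y} : ℤ) - 1)
        = ((Nat.card (stabilizer G e) : ℤ) - 1) := fun e => by rw [hstab]
    rw [Finset.sum_congr rfl (fun e _ => this e), Finset.sum_sub_distrib, Finset.sum_const,
      Finset.card_univ, ← Nat.cast_sum, hEsum, horbset]
    simp only [Nat.card_eq_fintype_card]
    push_cast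
    ring
  rw [hfsV, hfsE, hg, hgQ]
  ring
end

section
/- Let X be a finite connected graph of genus g and let G be a finite group acting on X, possibly with invertible edges. Define g(X/G)_tail = 1 − (#(G-orbits on V(X)) + #(G-orbits on E(X))) + #(G-orbits on D(X)), the genus of the factor graph with semi-edges, obtained as the genus of the quotient of the barycentric subdivision of X by G. Then g − 1 = |G|·(g(X/G)_tail − 1) + Σ_{v ∈ V(X)} (|G^v| − 1) − Σ_{e ∈ E(X)} (|G^e| − 1) + Σ_{e ∈ E^inv(X)} |G^e|. -/
open MulAction

/-- The induced action of `G` on unordered pairs of darts. -/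
instance sym2MulActionAux {G D : Type} [Group G] [MulAction G D] : MulAction G (Sym2 D) where
  smul g e := Sym2.map (fun y => g • y) e
  one_smul e := by
    refine Sym2.ind (fun x y => ?_) e
    show Sym2.map _ _ = _
    simp
  mul_smul g h e := by
    refine Sym2.ind (fun x y => ?_) e
    show Sym2.map _ _ = Sym2.map _ (Sym2.map _ _)
    simp [mul_smul]

lemma sym2_smul_def' {G D : Type} [Group G] [MulAction G D] (g : G) (e : Sym2 D) :
    g • e = Sym2.map (fun y => g • y) e := rfl

/-- Orbit-counting: the sum of stabilizer orders over an invariant set equals the number of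
orbits in it times the group order. -/
lemma sum_stab_key {G S : Type} [Group G] [Fintype G] [Fintype S] [MulAction G S]
    (A : Set S) (hA : ∀ (g : G) (s : S), s ∈ A → g • s ∈ A) :
    ∑ s ∈ A.toFinite.toFinset, Nat.card (stabilizer G s)
      = Nat.card {o : Set S | ∃ s ∈ A, o = orbit G s} * Nat.card G := by
  classical
  have hOrbSub : ∀ s : S, s ∈ A → ∀ t ∈ orbit G s, t ∈ A := by
    rintro s hs t ⟨g, rfl⟩; exact hA g s hs
  rw [← Finset.sum_fiberwise_of_maps_to
    (g := fun s => orbit G s) (t := A.toFinite.toFinset.image (fun s => orbit G s))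
    (fun s hs => Finset.mem_image_of_mem _ hs)]
  have hinner : ∀ o ∈ A.toFinite.toFinset.image (fun s => orbit G s),
      ∑ t ∈ A.toFinite.toFinset.filter (fun t => orbit G t = o), Nat.card (stabilizer G t)
        = Nat.card G := by
    intro o ho
    obtain ⟨s0, hs0, rfl⟩ := Finset.mem_image.1 ho
    have hs0A : s0 ∈ A := A.toFinite.mem_toFinset.1 hs0
    have hfib : A.toFinite.toFinset.filter (fun t => orbit G t = orbit G s0)
        = (orbit G s0).toFinite.toFinset := by
      ext t
      simp only [Finset.mem_filter, Set.Finite.mem_toFinset]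
      constructor
      · rintro ⟨_, h⟩; exact orbit_eq_iff.1 h
      · intro ht; exact ⟨hOrbSub s0 hs0A t ht, orbit_eq_iff.2 ht⟩
    rw [hfib]
    have hterm : ∀ t ∈ (orbit G s0).toFinite.toFinset,
        Nat.card (stabilizer G t) = Nat.card (stabilizer G s0) := by
      intro t ht
      have h : orbitRel G S t s0 := orbitRel_apply.2 ((orbit G s0).toFinite.mem_toFinset.1 ht)
      exact Nat.card_congr (stabilizerEquivStabilizerOfOrbitRel h).toEquiv
    rw [Finset.sum_congr rfl hterm, Finset.sum_const, smul_eq_mul]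
    have hcard : (orbit G s0).toFinite.toFinset.card = Nat.card (orbit G s0) := by
      rw [Nat.card_coe_set_eq, Set.ncard_eq_toFinset_card', Set.toFinite_toFinset]
    rw [hcard]
    haveI : Fintype (orbit G s0) := (orbit G s0).toFinite.fintype
    haveI : Fintype (stabilizer G s0) := Fintype.ofFinite _
    rw [Nat.card_eq_fintype_card, Nat.card_eq_fintype_card, Nat.card_eq_fintype_card]
    exact card_orbit_mul_card_stabilizer_eq_card_group G s0
  rw [Finset.sum_congr rfl hinner, Finset.sum_const, smul_eq_mul]
  congr 1
  have : {o : Set S | ∃ s ∈ A, o = orbit G s}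
      = ↑(A.toFinite.toFinset.image (fun s => orbit G s)) := by
    ext o
    simp only [Set.mem_setOf_eq, Finset.coe_image, Set.mem_image,
      Set.Finite.coe_toFinset, eq_comm]
  rw [this, Nat.card_coe_set_eq, Set.ncard_coe_finset]

section EdgeLemmas
variable {G D : Type} [Group G] [Fintype G] [MulAction G D]

omit [Fintype G] in
lemma pstab_card (bar : D → D)
    (hbar_equiv : ∀ (g : G) (x : D), bar (g • x) = g • bar x) (x : D) :
    Nat.card {g : G | ∀ y ∈ Sym2.mk x (bar x), g • y = y}
      = Nat.card (stabilizer G x) := by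
  apply Nat.card_congr
  apply Equiv.subtypeEquivRight
  intro g
  simp only [Set.mem_setOf_eq, Sym2.mem_iff, mem_stabilizer_iff]
  constructor
  · intro h; exact h x (Or.inl rfl)
  · rintro h y (rfl | rfl)
    · exact h
    · rw [← hbar_equiv, h]

omit [Fintype G] in
lemma sstab_mem (bar : D → D)
    (hbar_invol : ∀ x, bar (bar x) = x)
    (hbar_equiv : ∀ (g : G) (x : D), bar (g • x) = g • bar x) (x : D) (g : G) :
    Sym2.map (fun y => g • y) (Sym2.mk x (bar x)) = Sym2.mk x (bar x)
      ↔ g • x = x ∨ g • x = bar x := by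
  rw [Sym2.map_pair_eq, Sym2.eq_iff]
  constructor
  · rintro (⟨h, -⟩ | ⟨h, -⟩)
    · exact Or.inl h
    · exact Or.inr h
  · rintro (h | h)
    · exact Or.inl ⟨h, by rw [← hbar_equiv, h]⟩
    · exact Or.inr ⟨h, by rw [← hbar_equiv, h, hbar_invol]⟩

omit [Fintype G] in
lemma card_inv_aux (bar : D → D) (x : D)
    (h : ∃ g : G, g • x = bar x) :
    ({g : G | g • x = bar x} : Set G).ncard = ({g : G | g • x = x} : Set G).ncard := by
  obtain ⟨g0, hg0⟩ := h
  have himg : {g : G | g • x = bar x} = (fun h => g0 * h) '' {g : G | g • x = x} := by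
    ext g
    simp only [Set.mem_setOf_eq, Set.mem_image]
    constructor
    · intro hg
      refine ⟨g0⁻¹ * g, ?_, by group⟩
      rw [mul_smul, hg, ← hg0, inv_smul_smul]
    · rintro ⟨h, hh, rfl⟩
      rw [mul_smul, hh, hg0]
  rw [himg, Set.ncard_image_of_injective _ (mul_right_injective g0)]

open scoped Classical in
lemma sstab_card (bar : D → D)
    (hbar_invol : ∀ x, bar (bar x) = x) (hbar_nofix : ∀ x, bar x ≠ x)
    (hbar_equiv : ∀ (g : G) (x : D), bar (g • x) = g • bar x) (x : D) :
    Nat.card (stabilizer G (Sym2.mk x (bar x)))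
      = Nat.card (stabilizer G x)
        + (if ∃ g : G, g • x = bar x then Nat.card (stabilizer G x) else 0) := by
  classical
  have h1 : Nat.card (stabilizer G (Sym2.mk x (bar x)))
      = ({g : G | g • x = x} ∪ {g : G | g • x = bar x} : Set G).ncard := by
    rw [← Nat.card_coe_set_eq]
    apply Nat.card_congr
    apply Equiv.subtypeEquivRight
    intro g
    rw [mem_stabilizer_iff, sym2_smul_def', sstab_mem bar hbar_invol hbar_equiv]
    simp [Set.mem_union]
  have h2 : Nat.card (stabilizer G x) = ({g : G | g • x = x} : Set G).ncard := by
    rw [← Nat.card_coe_set_eq]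
    apply Nat.card_congr
    exact Equiv.subtypeEquivRight fun g => by simp [mem_stabilizer_iff]
  have hdisj : Disjoint ({g : G | g • x = x} : Set G) {g : G | g • x = bar x} := by
    rw [Set.disjoint_left]
    rintro g hg1 hg2
    exact hbar_nofix x (by rw [← hg2, hg1])
  rw [h1, h2, Set.ncard_union_eq hdisj (Set.toFinite _) (Set.toFinite _)]
  congr 1
  split_ifs with h
  · exact card_inv_aux bar x h
  · have : ({g : G | g • x = bar x} : Set G) = ∅ := by
      ext g; simp only [Set.mem_setOf_eq, Set.mem_empty_iff_false, iff_false]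
      exact fun hg => h ⟨g, hg⟩
    rw [this, Set.ncard_empty]

end EdgeLemmas

/-- A finite graph `X = (D, V; I, bar)`: `D` the darts, `V` the vertices,
`I` the incidence function, `bar` the fixed-point-free dart-reversing involution.
A finite group `G` acts on `X` via automorphisms (equivariantly and faithfully).
The edge set `E` consists of the unordered pairs `{x, bar x}`. -/
theorem riemann_hurwitz_tail
    {V D G : Type} [Fintype V] [Fintype D] [Nonempty V]
    [Group G] [Fintype G] [MulAction G D] [MulAction G V]
    (I : D → V) (bar : D → D)
    (hbar_invol : ∀ x : D, bar (bar x) = x)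
    (hbar_nofix : ∀ x : D, bar x ≠ x)
    (hI_equiv : ∀ (g : G) (x : D), I (g • x) = g • I x)
    (hbar_equiv : ∀ (g : G) (x : D), bar (g • x) = g • bar x)
    (hfaithful : ∀ g : G, (∀ x : D, g • x = x) → (∀ v : V, g • v = v) → g = 1)
    (E : Set (Sym2 D)) (hE : E = {e : Sym2 D | ∃ x : D, e = Sym2.mk x (bar x)})
    (hconn : ∀ u v : V, Relation.ReflTransGen
      (fun a b : V => ∃ x : D, I x = a ∧ I (bar x) = b) u v)
    (Einv : Set (Sym2 D))
    (hEinv : Einv = {e : Sym2 D | e ∈ E ∧ ∃ x ∈ e, ∃ g : G, g • x = bar x})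
    (g gQ : ℤ)
    (hg : g = 1 - (Nat.card V : ℤ) + (Nat.card E : ℤ))
    (hgQ : gQ = 1 - ((Nat.card {s : Set V | ∃ v : V, s = MulAction.orbit G v} : ℤ) + (Nat.card {s : Set (Sym2 D) | ∃ e ∈ E, s = {e' : Sym2 D | ∃ g : G, Sym2.map (fun y => g • y) e = e'}} : ℤ)) + (Nat.card {s : Set D | ∃ x : D, s = MulAction.orbit G x} : ℤ)) :
    g - 1 = (Nat.card G : ℤ) * (gQ - 1)
      + (∑ᶠ v : V, ((Nat.card (MulAction.stabilizer G v) : ℤ) - 1))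
      - (∑ᶠ e ∈ E, ((Nat.card {g : G | ∀ y ∈ e, g • y = y} : ℤ) - 1))
      + (∑ᶠ e ∈ Einv, (Nat.card {g : G | ∀ y ∈ e, g • y = y} : ℤ)) := by
  classical
  set p : D → Sym2 D := fun x => Sym2.mk x (bar x) with hp
  set EF : Finset (Sym2 D) := Finset.univ.image p with hEFdef
  have hEF : E = ↑EF := by
    rw [hE]
    ext e
    simp only [Set.mem_setOf_eq, hEFdef, Finset.coe_image, Finset.coe_univ, Set.image_univ,
      Set.mem_range, hp]
    exact exists_congr fun x => eq_comm
  set EIF : Finset (Sym2 D) := EF.filter (fun e => ∃ x ∈ e, ∃ g : G, g • x = bar x) with hEIFdef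
  have hEIF : Einv = ↑EIF := by
    rw [hEinv, hEF, hEIFdef]
    ext e
    simp [Finset.mem_filter]
  -- vertices
  have hVuniv : (Set.univ : Set V).toFinite.toFinset = Finset.univ := by simp
  have hSV := sum_stab_key (G := G) (Set.univ : Set V) (fun _ _ _ => Set.mem_univ _)
  rw [hVuniv, show {o : Set V | ∃ s ∈ (Set.univ : Set V), o = orbit G s}
      = {s : Set V | ∃ v : V, s = orbit G v} by simp] at hSV
  -- darts
  have hDuniv : (Set.univ : Set D).toFinite.toFinset = Finset.univ := by simp
  have hSD := sum_stab_key (G := G) (Set.univ : Set D) (fun _ _ _ => Set.mem_univ _)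
  rw [hDuniv, show {o : Set D | ∃ s ∈ (Set.univ : Set D), o = orbit G s}
      = {s : Set D | ∃ x : D, s = orbit G x} by simp] at hSD
  -- edges (setwise stabilizers)
  have hEinvariant : ∀ (g : G) (e : Sym2 D), e ∈ E → g • e ∈ E := by
    rw [hE]
    rintro g e ⟨x, rfl⟩
    exact ⟨g • x, by rw [sym2_smul_def', Sym2.map_pair_eq, hbar_equiv]⟩
  have hSS := sum_stab_key (G := G) E hEinvariant
  have hEfin : E.toFinite.toFinset = EF := by
    ext e; rw [Set.Finite.mem_toFinset, hEF, Finset.mem_coe]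
  have hOset : {o : Set (Sym2 D) | ∃ e ∈ E, o = orbit G e}
      = {s : Set (Sym2 D) | ∃ e ∈ E, s = {e' : Sym2 D | ∃ g : G, Sym2.map (fun y => g • y) e = e'}} := by
    have horb : ∀ e : Sym2 D, orbit G e
        = {e' : Sym2 D | ∃ g : G, Sym2.map (fun y => g • y) e = e'} := by
      intro e
      ext e'
      rw [mem_orbit_iff]
      exact exists_congr fun g => by rw [sym2_smul_def']
    simp_rw [horb]
  rw [hEfin, hOset] at hSS
  -- stabilizer of bar x equals stabilizer of x
  have hstabbar : ∀ x : D, stabilizer G (bar x) = stabilizer G x := by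
    intro x
    ext g
    rw [mem_stabilizer_iff, mem_stabilizer_iff, ← hbar_equiv]
    constructor
    · intro h
      have := congrArg bar h
      rwa [hbar_invol, hbar_invol] at this
    · intro h; rw [h]
  -- darts fiber over edges
  have hfiber : ∑ x : D, Nat.card (stabilizer G x)
      = ∑ e ∈ EF, ∑ x ∈ Finset.univ.filter (fun x => p x = e), Nat.card (stabilizer G x) := by
    rw [Finset.sum_fiberwise_of_maps_to (fun x _ => Finset.mem_image_of_mem p (Finset.mem_univ x))]
  have hpbar : ∀ x : D, p (bar x) = p x := by
    intro x
    simp only [hp]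
    rw [hbar_invol]
    exact Sym2.eq_swap
  have hinner2 : ∀ e ∈ EF, ∑ x ∈ Finset.univ.filter (fun x => p x = e), Nat.card (stabilizer G x)
      = 2 * Nat.card {g : G | ∀ y ∈ e, g • y = y} := by
    intro e he
    obtain ⟨x0, -, rfl⟩ := Finset.mem_image.1 he
    have hfil : Finset.univ.filter (fun x => p x = p x0) = {x0, bar x0} := by
      ext x
      simp only [Finset.mem_filter, Finset.mem_univ, true_and, Finset.mem_insert,
        Finset.mem_singleton]
      constructor
      · intro h
        rcases Sym2.eq_iff.1 h with ⟨h1, -⟩ | ⟨h1, -⟩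
        · exact Or.inl h1
        · exact Or.inr h1
      · rintro (rfl | rfl)
        · rfl
        · exact hpbar x0
    have hx0ne : x0 ≠ bar x0 := fun h => hbar_nofix x0 h.symm
    rw [hfil, Finset.sum_pair hx0ne, hstabbar x0]
    have hps : Nat.card {g : G | ∀ y ∈ p x0, g • y = y} = Nat.card (stabilizer G x0) := by
      simp only [hp]
      exact pstab_card bar hbar_equiv x0
    rw [hps]
    ring
  have hSD2 : ∑ x : D, Nat.card (stabilizer G x)
      = 2 * ∑ e ∈ EF, Nat.card {g : G | ∀ y ∈ e, g • y = y} := by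
    rw [hfiber, Finset.sum_congr rfl hinner2, ← Finset.mul_sum]
  -- setwise vs pointwise stabilizers
  have hper : ∀ e ∈ EF, Nat.card (stabilizer G e)
      = Nat.card {g : G | ∀ y ∈ e, g • y = y}
        + (if (∃ x ∈ e, ∃ g : G, g • x = bar x) then Nat.card {g : G | ∀ y ∈ e, g • y = y}
          else 0) := by
    intro e he
    obtain ⟨x0, -, rfl⟩ := Finset.mem_image.1 he
    have hps : Nat.card {g : G | ∀ y ∈ p x0, g • y = y} = Nat.card (stabilizer G x0) := by
      simp only [hp]
      exact pstab_card bar hbar_equiv x0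
    have hsc : Nat.card (stabilizer G (p x0)) = Nat.card (stabilizer G x0)
        + (if ∃ g : G, g • x0 = bar x0 then Nat.card (stabilizer G x0) else 0) := by
      simp only [hp]
      exact sstab_card bar hbar_invol hbar_nofix hbar_equiv x0
    have hiff : (∃ x ∈ p x0, ∃ g : G, g • x = bar x) ↔ (∃ g : G, g • x0 = bar x0) := by
      simp only [hp]
      constructor
      · rintro ⟨x, hx, g, hg⟩
        rcases Sym2.mem_iff.1 hx with rfl | rfl
        · exact ⟨g, hg⟩
        · refine ⟨g, ?_⟩
          have := congrArg bar hg
          simpa only [hbar_equiv, hbar_invol] using this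
      · rintro ⟨g, hg⟩
        exact ⟨x0, Sym2.mem_mk_left _ _, g, hg⟩
    rw [hsc, hps, if_congr hiff rfl rfl]
  have hSS2 : ∑ e ∈ EF, Nat.card (stabilizer G e)
      = ∑ e ∈ EF, Nat.card {g : G | ∀ y ∈ e, g • y = y}
        + ∑ e ∈ EIF, Nat.card {g : G | ∀ y ∈ e, g • y = y} := by
    rw [Finset.sum_congr rfl hper, Finset.sum_add_distrib, hEIFdef, Finset.sum_filter]
  -- cardinalities
  have hcardE : (Nat.card E : ℤ) = (EF.card : ℤ) := by
    rw [hEF, Nat.card_coe_set_eq, Set.ncard_coe_finset]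
  have hcardV : (Nat.card V : ℤ) = (Fintype.card V : ℤ) := by rw [Nat.card_eq_fintype_card]
  -- rewrite the goal sums
  rw [hEF, hEIF, finsum_mem_coe_finset, finsum_mem_coe_finset, finsum_eq_sum_of_fintype]
  have e1 : ∑ v : V, ((Nat.card (stabilizer G v) : ℤ) - 1)
      = ((∑ v : V, Nat.card (stabilizer G v) : ℕ) : ℤ) - (Fintype.card V : ℤ) := by
    rw [Finset.sum_sub_distrib, Finset.sum_const, Finset.card_univ]
    push_cast
    ring
  have e2 : ∑ e ∈ EF, ((Nat.card {g : G | ∀ y ∈ e, g • y = y} : ℤ) - 1)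
      = ((∑ e ∈ EF, Nat.card {g : G | ∀ y ∈ e, g • y = y} : ℕ) : ℤ) - (EF.card : ℤ) := by
    rw [Finset.sum_sub_distrib, Finset.sum_const]
    push_cast
    ring
  have e3 : ∑ e ∈ EIF, (Nat.card {g : G | ∀ y ∈ e, g • y = y} : ℤ)
      = ((∑ e ∈ EIF, Nat.card {g : G | ∀ y ∈ e, g • y = y} : ℕ) : ℤ) := by
    push_cast
    ring
  rw [e1, e2, e3, hg, hgQ, hcardE, hcardV]
  have hSV' : ((∑ v : V, Nat.card (stabilizer G v) : ℕ) : ℤ)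
      = (Nat.card {s : Set V | ∃ v : V, s = orbit G v} : ℤ) * (Nat.card G : ℤ) := by
    exact_mod_cast congrArg (Nat.cast : ℕ → ℤ) hSV
  have hSD' : ((∑ x : D, Nat.card (stabilizer G x) : ℕ) : ℤ)
      = (Nat.card {s : Set D | ∃ x : D, s = orbit G x} : ℤ) * (Nat.card G : ℤ) := by
    exact_mod_cast congrArg (Nat.cast : ℕ → ℤ) hSD
  have hSS' : ((∑ e ∈ EF, Nat.card (stabilizer G e) : ℕ) : ℤ)
      = (Nat.card {s : Set (Sym2 D) | ∃ e ∈ E, s = {e' : Sym2 D | ∃ g : G, Sym2.map (fun y => g • y) e = e'}} : ℤ) * (Nat.card G : ℤ) := by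
    exact_mod_cast congrArg (Nat.cast : ℕ → ℤ) hSS
  have hSD2' : ((∑ x : D, Nat.card (stabilizer G x) : ℕ) : ℤ)
      = 2 * ((∑ e ∈ EF, Nat.card {g : G | ∀ y ∈ e, g • y = y} : ℕ) : ℤ) := by
    exact_mod_cast congrArg (Nat.cast : ℕ → ℤ) hSD2
  have hSS2' : ((∑ e ∈ EF, Nat.card (stabilizer G e) : ℕ) : ℤ)
      = ((∑ e ∈ EF, Nat.card {g : G | ∀ y ∈ e, g • y = y} : ℕ) : ℤ)
        + ((∑ e ∈ EIF, Nat.card {g : G | ∀ y ∈ e, g • y = y} : ℕ) : ℤ) := by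
    exact_mod_cast congrArg (Nat.cast : ℕ → ℤ) hSS2
  linarith [hSV', hSD', hSS', hSD2', hSS2']
end

section
/- Let X be a finite connected graph of genus g and let G be a finite group acting on X, possibly with invertible edges. Define the factor graph (X/G)_free whose vertices are the G-orbits of V(X) and whose edges are the G-orbits of the non-invertible edges of X (the loops arising from invertible edges being deleted), with genus g(X/G)_free = 1 − #(G-orbits on V(X)) + #(G-orbits on E(X) \ E^inv(X)). Then g − 1 = |G|·(g(X/G)_free − 1) + Σ_{v ∈ V(X)} (|G^v| − 1) − Σ_{e ∈ E(X)} (|G^e| − 1) + Σ_{e ∈ E^inv(X)} |G^e|. -/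
open MulAction in
lemma sum_stab_eq' {G α : Type} [Group G] [Fintype G] [Fintype α] [MulAction G α]
    (S : Set α) (hS : ∀ (g : G) a, a ∈ S → g • a ∈ S) :
    ∑ a ∈ (Set.toFinite S).toFinset, (Nat.card (MulAction.stabilizer G a) : ℤ)
      = (Nat.card G : ℤ) * (Nat.card {s : Set α | ∃ a ∈ S, s = MulAction.orbit G a} : ℤ) := by
  classical
  set T := (Set.toFinite S).toFinset with hT
  have hmem : ∀ a, a ∈ T ↔ a ∈ S := fun a => Set.Finite.mem_toFinset _
  have hos : ∀ a : α, (Nat.card (orbit G a)) * Nat.card (stabilizer G a) = Nat.card G := by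
    intro a
    rw [← Nat.card_prod]
    exact Nat.card_congr (orbitProdStabilizerEquivGroup G a)
  have hkey : ∀ a₀ ∈ T, ∑ a ∈ T.filter (fun a => orbit G a = orbit G a₀),
      (Nat.card (stabilizer G a) : ℤ) = (Nat.card G : ℤ) := by
    intro a₀ h₀
    have hfil : T.filter (fun a => orbit G a = orbit G a₀)
        = (Set.toFinite (orbit G a₀)).toFinset := by
      ext a
      simp only [Finset.mem_filter, Set.Finite.mem_toFinset, hmem]
      constructor
      · rintro ⟨-, h⟩; rw [← h]; exact mem_orbit_self a
      · intro h
        refine ⟨?_, (orbit_eq_iff).2 h⟩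
        obtain ⟨g, rfl⟩ := h
        exact hS g a₀ ((hmem a₀).1 h₀)
    rw [hfil]
    have hcard : ∀ a ∈ (Set.toFinite (orbit G a₀)).toFinset,
        (Nat.card (stabilizer G a) : ℤ) = (Nat.card (stabilizer G a₀) : ℤ) := by
      intro a ha
      have ha' : a ∈ orbit G a₀ := (Set.Finite.mem_toFinset _).1 ha
      have h1 := hos a
      have h2 := hos a₀
      rw [orbit_eq_iff.2 ha'] at h1
      haveI : Nonempty (orbit G a₀) := Set.Nonempty.to_subtype ⟨a₀, mem_orbit_self a₀⟩
      have hpos : 0 < Nat.card (orbit G a₀) := Nat.card_pos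
      exact_mod_cast congrArg Nat.cast (Nat.eq_of_mul_eq_mul_left hpos (h1.trans h2.symm))
    rw [Finset.sum_congr rfl hcard, Finset.sum_const, nsmul_eq_mul]
    have hc : ((Set.toFinite (orbit G a₀)).toFinset.card : ℤ) = (Nat.card (orbit G a₀) : ℤ) := by
      rw [Nat.card_coe_set_eq, Set.ncard_eq_toFinset_card (orbit G a₀) (Set.toFinite _)]
    rw [hc]
    exact_mod_cast congrArg Nat.cast (hos a₀)
  have hfib := Finset.sum_fiberwise_of_maps_to (g := fun a => orbit G a)
      (t := T.image (fun a => orbit G a))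
      (fun a ha => Finset.mem_image_of_mem _ ha)
      (fun a => (Nat.card (stabilizer G a) : ℤ))
  rw [← hfib]
  have hconst : ∀ s ∈ T.image (fun a => orbit G a),
      ∑ a ∈ T.filter (fun a => orbit G a = s), (Nat.card (stabilizer G a):ℤ)
        = (Nat.card G : ℤ) := by
    intro s hs
    obtain ⟨a₀, ha₀, rfl⟩ := Finset.mem_image.1 hs
    exact hkey a₀ ha₀
  rw [Finset.sum_congr rfl hconst, Finset.sum_const, nsmul_eq_mul]
  have hset : {s : Set α | ∃ a ∈ S, s = orbit G a} = ↑(T.image (fun a => orbit G a)) := by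
    ext s
    simp only [Set.mem_setOf_eq, Finset.coe_image, Set.mem_image, Finset.mem_coe, hmem]
    constructor
    · rintro ⟨a, ha, rfl⟩; exact ⟨a, ha, rfl⟩
    · rintro ⟨a, ha, rfl⟩; exact ⟨a, ha, rfl⟩
  rw [hset, Nat.card_coe_set_eq, Set.ncard_coe_finset]
  ring

/-- A finite graph `X = (D, V; I, bar)`: `D` the darts, `V` the vertices,
`I` the incidence function, `bar` the fixed-point-free dart-reversing involution.
A finite group `G` acts on `X` via automorphisms (equivariantly and faithfully).
The edge set `E` consists of the unordered pairs `{x, bar x}`. -/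
theorem riemann_hurwitz_free
    {V D G : Type} [Fintype V] [Fintype D] [Nonempty V]
    [Group G] [Fintype G] [MulAction G D] [MulAction G V]
    (I : D → V) (bar : D → D)
    (hbar_invol : ∀ x : D, bar (bar x) = x)
    (hbar_nofix : ∀ x : D, bar x ≠ x)
    (hI_equiv : ∀ (g : G) (x : D), I (g • x) = g • I x)
    (hbar_equiv : ∀ (g : G) (x : D), bar (g • x) = g • bar x)
    (hfaithful : ∀ g : G, (∀ x : D, g • x = x) → (∀ v : V, g • v = v) → g = 1)
    (E : Set (Sym2 D)) (hE : E = {e : Sym2 D | ∃ x : D, e = Sym2.mk x (bar x)})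
    (hconn : ∀ u v : V, Relation.ReflTransGen
      (fun a b : V => ∃ x : D, I x = a ∧ I (bar x) = b) u v)
    (Einv : Set (Sym2 D))
    (hEinv : Einv = {e : Sym2 D | e ∈ E ∧ ∃ x ∈ e, ∃ g : G, g • x = bar x})
    (g gQ : ℤ)
    (hg : g = 1 - (Nat.card V : ℤ) + (Nat.card E : ℤ))
    (hgQ : gQ = 1 - (Nat.card {s : Set V | ∃ v : V, s = MulAction.orbit G v} : ℤ) + (Nat.card {s : Set (Sym2 D) | ∃ e ∈ (E \ Einv), s = {e' : Sym2 D | ∃ g : G, Sym2.map (fun y => g • y) e = e'}} : ℤ)) :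
    g - 1 = (Nat.card G : ℤ) * (gQ - 1)
      + (∑ᶠ v : V, ((Nat.card (MulAction.stabilizer G v) : ℤ) - 1))
      - (∑ᶠ e ∈ E, ((Nat.card {g : G | ∀ y ∈ e, g • y = y} : ℤ) - 1))
      + (∑ᶠ e ∈ Einv, (Nat.card {g : G | ∀ y ∈ e, g • y = y} : ℤ)) := by
  classical
  letI : SMul G (Sym2 D) := ⟨fun a e => Sym2.map (fun y => a • y) e⟩
  letI : MulAction G (Sym2 D) :=
    { one_smul := fun e => by
        show Sym2.map _ e = e
        induction e using Sym2.ind with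
        | _ x y => simp [Sym2.map_pair_eq]
      mul_smul := fun a b e => by
        show Sym2.map _ e = Sym2.map _ (Sym2.map _ e)
        induction e using Sym2.ind with
        | _ x y => simp [Sym2.map_pair_eq, mul_smul] }
  have hsmul_def : ∀ (a : G) (e : Sym2 D), a • e = Sym2.map (fun y => a • y) e :=
    fun _ _ => rfl
  -- E is invariant
  have hEinvt : ∀ (a : G) (e : Sym2 D), e ∈ E → a • e ∈ E := by
    intro a e he
    rw [hE] at he ⊢
    obtain ⟨x, rfl⟩ := he
    exact ⟨a • x, by rw [hsmul_def, Sym2.map_pair_eq, hbar_equiv]⟩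
  -- Einv is invariant
  have hEinvinvt : ∀ (a : G) (e : Sym2 D), e ∈ Einv → a • e ∈ Einv := by
    intro a e he
    rw [hEinv] at he ⊢
    obtain ⟨heE, x, hx, gg, hgg⟩ := he
    refine ⟨hEinvt a e heE, a • x, ?_, a * gg * a⁻¹, ?_⟩
    · rw [hsmul_def]
      exact Sym2.mem_map.2 ⟨x, hx, rfl⟩
    · rw [hbar_equiv, ← hgg, smul_smul, smul_smul, inv_mul_cancel_right]
  -- E \ Einv is invariant
  have hSinv : ∀ (a : G) (e : Sym2 D), e ∈ E \ Einv → a • e ∈ E \ Einv := by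
    rintro a e ⟨he, hne⟩
    refine ⟨hEinvt a e he, fun hc => hne ?_⟩
    have := hEinvinvt a⁻¹ _ hc
    rwa [inv_smul_smul] at this
  -- pointwise stabiliser = set stabiliser on non-invertible edges
  have hstab : ∀ e ∈ E \ Einv,
      (Nat.card {g : G | ∀ y ∈ e, g • y = y} : ℤ)
        = (Nat.card (MulAction.stabilizer G e) : ℤ) := by
    rintro e ⟨heE, heI⟩
    have heE' : ∃ x : D, e = Sym2.mk x (bar x) := by rw [hE] at heE; exact heE
    obtain ⟨x, rfl⟩ := heE'
    have hseteq : {g : G | ∀ y ∈ Sym2.mk x (bar x), g • y = y}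
        = ((MulAction.stabilizer G (Sym2.mk x (bar x)) : Subgroup G) : Set G) := by
      ext a
      simp only [Set.mem_setOf_eq, SetLike.mem_coe, MulAction.mem_stabilizer_iff]
      constructor
      · intro h
        rw [hsmul_def, Sym2.map_pair_eq, h x (Sym2.mem_mk_left x _),
          h (bar x) (Sym2.mem_mk_right x _)]
      · intro h y hy
        rw [hsmul_def, Sym2.map_pair_eq] at h
        rcases Sym2.eq_iff.mp h with ⟨h1, h2⟩ | ⟨h1, h2⟩
        · rcases Sym2.mem_iff.mp hy with rfl | rfl
          · exact h1
          · exact h2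
        · exfalso
          apply heI
          rw [hEinv]
          exact ⟨heE, x, Sym2.mem_mk_left x _, a, h1⟩
    rw [hseteq, SetLike.coe_sort_coe]
  -- orbit description
  have horb : ∀ e : Sym2 D,
      {e' : Sym2 D | ∃ g : G, Sym2.map (fun y => g • y) e = e'} = MulAction.orbit G e := by
    intro e
    ext e'
    exact ⟨fun ⟨a, h⟩ => ⟨a, h⟩, fun ⟨a, h⟩ => ⟨a, h⟩⟩
  -- vertex counting
  have hVsum := sum_stab_eq' (G := G) (Set.univ : Set V) (fun _ _ _ => Set.mem_univ _)
  have hTuniv : (Set.toFinite (Set.univ : Set V)).toFinset = Finset.univ := by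
    ext v; simp
  have hOrbV : {s : Set V | ∃ v ∈ (Set.univ : Set V), s = MulAction.orbit G v}
      = {s : Set V | ∃ v : V, s = MulAction.orbit G v} := by
    simp
  rw [hTuniv, hOrbV] at hVsum
  -- edge counting
  have hEsum : ∑ e ∈ (Set.toFinite (E \ Einv)).toFinset,
        (Nat.card {g : G | ∀ y ∈ e, g • y = y} : ℤ)
      = (Nat.card G : ℤ) * (Nat.card {s : Set (Sym2 D) | ∃ e ∈ (E \ Einv),
          s = {e' : Sym2 D | ∃ g : G, Sym2.map (fun y => g • y) e = e'}} : ℤ) := by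
    rw [Finset.sum_congr rfl
      (fun e he => hstab e ((Set.Finite.mem_toFinset _).1 he))]
    simp only [horb]
    exact sum_stab_eq' (G := G) (E \ Einv) hSinv
  -- convert finsums to finset sums
  have hfV : (∑ᶠ v : V, ((Nat.card (MulAction.stabilizer G v) : ℤ) - 1))
      = ∑ v : V, ((Nat.card (MulAction.stabilizer G v) : ℤ) - 1) :=
    finsum_eq_sum_of_fintype _
  have hfE : (∑ᶠ e ∈ E, ((Nat.card {g : G | ∀ y ∈ e, g • y = y} : ℤ) - 1))
      = ∑ e ∈ (Set.toFinite E).toFinset,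
          ((Nat.card {g : G | ∀ y ∈ e, g • y = y} : ℤ) - 1) := by
    rw [← finsum_mem_coe_finset, Set.Finite.coe_toFinset]
  have hfEinv : (∑ᶠ e ∈ Einv, (Nat.card {g : G | ∀ y ∈ e, g • y = y} : ℤ))
      = ∑ e ∈ (Set.toFinite Einv).toFinset,
          (Nat.card {g : G | ∀ y ∈ e, g • y = y} : ℤ) := by
    rw [← finsum_mem_coe_finset, Set.Finite.coe_toFinset]
  rw [hfV, hfE, hfEinv, hg, hgQ]
  -- split the sum over E
  have hsub : (Set.toFinite Einv).toFinset ⊆ (Set.toFinite E).toFinset := by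
    intro e he
    rw [Set.Finite.mem_toFinset] at he ⊢
    rw [hEinv] at he
    exact he.1
  have hsd : (Set.toFinite (E \ Einv)).toFinset
      = (Set.toFinite E).toFinset \ (Set.toFinite Einv).toFinset := by
    ext e
    simp only [Set.Finite.mem_toFinset, Finset.mem_sdiff, Set.mem_diff]
  have hsplit := Finset.sum_sdiff (f := fun e =>
      ((Nat.card {g : G | ∀ y ∈ e, g • y = y} : ℤ) - 1)) hsub
  rw [← hsd] at hsplit
  -- cardinalities
  have hcV : (Nat.card V : ℤ) = (Finset.univ : Finset V).card := by
    rw [Nat.card_eq_fintype_card, Finset.card_univ]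
  have hcE : (Nat.card E : ℤ) = ((Set.toFinite E).toFinset.card : ℤ) := by
    rw [Nat.card_coe_set_eq, Set.ncard_eq_toFinset_card E (Set.toFinite E)]
  have hcard_split : (Set.toFinite E).toFinset.card
      = (Set.toFinite (E \ Einv)).toFinset.card + (Set.toFinite Einv).toFinset.card := by
    have hle := Finset.card_le_card hsub
    rw [hsd, Finset.card_sdiff_of_subset hsub]
    omega
  have hcs : ((Set.toFinite E).toFinset.card : ℤ)
      = ((Set.toFinite (E \ Einv)).toFinset.card : ℤ)
        + ((Set.toFinite Einv).toFinset.card : ℤ) := by exact_mod_cast hcard_split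
  simp only [Finset.sum_sub_distrib, Finset.sum_const, nsmul_eq_mul, mul_one] at hsplit ⊢
  linarith [hVsum, hEsum, hsplit, hcV, hcE, hcs]
end

section
/- Let X be a finite connected graph of genus g and let G be a finite group acting harmonically on X (that is, G acts freely on the set of darts D(X)), possibly with invertible edges. Define g(X/G)_free = 1 − #(G-orbits on V(X)) + #(G-orbits on E(X) \ E^inv(X)), the genus of the factor graph obtained by deleting the loops arising from invertible edges. Then g − 1 = |G|·(g(X/G)_free − 1) + Σ_{v ∈ V(X)} (|G^v| − 1) + |E^inv(X)|. -/
open MulAction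

lemma aux_card_orbitSets (G α : Type) [Group G] [MulAction G α] :
    Nat.card {s : Set α | ∃ a : α, s = orbit G a} = Nat.card (orbitRel.Quotient G α) := by
  refine (Nat.card_congr (Equiv.ofBijective
    (fun q : orbitRel.Quotient G α =>
      (⟨q.orbit, by
        induction q using Quotient.inductionOn' with
        | h a => exact ⟨a, rfl⟩⟩ : {s : Set α | ∃ a : α, s = orbit G a}))
    ⟨fun q q' h => orbitRel.Quotient.orbit_injective (congrArg Subtype.val h),
     by rintro ⟨s, a, rfl⟩; exact ⟨Quotient.mk'' a, Subtype.ext (orbitRel.Quotient.orbit_mk a)⟩⟩)).symm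

lemma aux_sum_stab (G α : Type) [Group G] [Fintype G] [MulAction G α] [Fintype α] :
    ∑ a : α, Nat.card (stabilizer G a) = Nat.card (orbitRel.Quotient G α) * Nat.card G := by
  classical
  haveI : ∀ g : G, Fintype (fixedBy α g) := fun g => Fintype.ofFinite _
  haveI : Fintype (orbitRel.Quotient G α) := Fintype.ofFinite _
  have hb := MulAction.sum_card_fixedBy_eq_card_orbits_mul_card_group G α
  have h1 : ∀ a : α, Nat.card (stabilizer G a)
      = (Finset.univ.filter fun g : G => g • a = a).card := by
    intro a
    rw [Nat.card_congr (Equiv.subtypeEquivRight (fun g => mem_stabilizer_iff)),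
      Nat.card_eq_fintype_card, Fintype.card_subtype]
  have h2 : ∀ g : G, Fintype.card (fixedBy α g)
      = (Finset.univ.filter fun a : α => g • a = a).card := by
    intro g
    rw [Fintype.card_congr (Equiv.subtypeEquivRight (fun a => mem_fixedBy)),
      Fintype.card_subtype]
  simp only [h1, h2, Finset.card_filter] at hb ⊢
  rw [Finset.sum_comm, hb, Nat.card_eq_fintype_card, Nat.card_eq_fintype_card]

lemma aux_card_free (G α : Type) [Group G] [Fintype G] [MulAction G α] [Fintype α]
    (hfree : ∀ (g : G) (a : α), g • a = a → g = 1) :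
    Nat.card α = Nat.card (orbitRel.Quotient G α) * Nat.card G := by
  classical
  haveI : ∀ g : G, Fintype (fixedBy α g) := fun g => Fintype.ofFinite _
  haveI : Fintype (orbitRel.Quotient G α) := Fintype.ofFinite _
  have hb := MulAction.sum_card_fixedBy_eq_card_orbits_mul_card_group G α
  have hsum : ∑ g : G, Fintype.card (fixedBy α g) = Fintype.card α := by
    rw [Finset.sum_eq_single 1]
    · have : fixedBy α (1 : G) = Set.univ := by
        ext a; simp [mem_fixedBy]
      calc Fintype.card (fixedBy α (1:G)) = Nat.card (fixedBy α (1:G)) :=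
              Nat.card_eq_fintype_card.symm
        _ = Nat.card (Set.univ : Set α) := by rw [this]
        _ = Fintype.card α := by
              rw [Nat.card_coe_set_eq, Set.ncard_univ, Nat.card_eq_fintype_card]
    · intro g _ hg
      haveI : IsEmpty (fixedBy α g) := ⟨fun ⟨a, ha⟩ => hg (hfree g a ha)⟩
      exact Fintype.card_eq_zero
    · intro h; exact absurd (Finset.mem_univ 1) h
  rw [hsum] at hb
  rw [Nat.card_eq_fintype_card, Nat.card_eq_fintype_card, Nat.card_eq_fintype_card]
  exact hb

lemma aux_card_free_subset (G α : Type) [Group G] [Fintype G] [MulAction G α] [Fintype α]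
    (A : Set α)
    (hA : ∀ (g : G) (a : α), a ∈ A → g • a ∈ A)
    (hfree : ∀ (g : G) (a : α), a ∈ A → g • a = a → g = 1) :
    Nat.card A = Nat.card {s : Set α | ∃ a ∈ A, s = orbit G a} * Nat.card G := by
  classical
  letI : SMul G ↥A := ⟨fun g a => ⟨g • (a : α), hA g a a.2⟩⟩
  letI : MulAction G ↥A :=
    { one_smul := fun a => Subtype.ext (one_smul G (a : α))
      mul_smul := fun g h a => Subtype.ext (mul_smul g h (a : α)) }
  haveI : Fintype ↥A := Fintype.ofFinite _
  have hcoe : ∀ (g : G) (a : ↥A), ((g • a : ↥A) : α) = g • (a : α) := fun _ _ => rfl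
  have hfree' : ∀ (g : G) (a : ↥A), g • a = a → g = 1 :=
    fun g a h => hfree g a a.2 (congrArg Subtype.val h)
  rw [aux_card_free G ↥A hfree']
  congr 1
  refine (Nat.card_congr (Equiv.ofBijective
    (fun q : orbitRel.Quotient G ↥A =>
      (⟨orbit G ((q.out : ↥A) : α), ⟨_, (q.out : ↥A).2, rfl⟩⟩ :
        {s : Set α | ∃ a ∈ A, s = orbit G a}))
    ⟨?_, ?_⟩))
  · intro q q' h
    have h1 : orbit G ((q.out : ↥A) : α) = orbit G ((q'.out : ↥A) : α) :=
      congrArg Subtype.val h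
    obtain ⟨g, hg⟩ := MulAction.orbit_eq_iff.mp h1
    have hrel : Quotient.mk'' q.out = (Quotient.mk'' q'.out : orbitRel.Quotient G ↥A) :=
      Quotient.sound' ((MulAction.orbitRel_apply).mpr ⟨g, Subtype.ext hg⟩)
    rw [Quotient.out_eq', Quotient.out_eq'] at hrel
    exact hrel
  · rintro ⟨s, a, haA, rfl⟩
    refine ⟨Quotient.mk'' (⟨a, haA⟩ : ↥A), Subtype.ext ?_⟩
    have h1 : Quotient.mk'' (Quotient.mk'' (⟨a, haA⟩ : ↥A)).out
        = (Quotient.mk'' (⟨a, haA⟩ : ↥A) : orbitRel.Quotient G ↥A) := Quotient.out_eq' _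
    obtain ⟨g, hg⟩ := (MulAction.orbitRel_apply).mp (Quotient.exact' h1)
    have h2 : ((Quotient.mk'' (⟨a, haA⟩ : ↥A)).out : α) = g • a := congrArg Subtype.val hg.symm
    show orbit G (((Quotient.mk'' (⟨a, haA⟩ : ↥A)).out : ↥A) : α) = orbit G a
    rw [h2, MulAction.orbit_smul]


/-- A finite graph `X = (D, V; I, bar)`: `D` the darts, `V` the vertices,
`I` the incidence function, `bar` the fixed-point-free dart-reversing involution.
A finite group `G` acts on `X` via automorphisms (equivariantly and faithfully).
The edge set `E` consists of the unordered pairs `{x, bar x}`. -/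
theorem riemann_hurwitz_harmonic_free
    {V D G : Type} [Fintype V] [Fintype D] [Nonempty V]
    [Group G] [Fintype G] [MulAction G D] [MulAction G V]
    (I : D → V) (bar : D → D)
    (hbar_invol : ∀ x : D, bar (bar x) = x)
    (hbar_nofix : ∀ x : D, bar x ≠ x)
    (hI_equiv : ∀ (g : G) (x : D), I (g • x) = g • I x)
    (hbar_equiv : ∀ (g : G) (x : D), bar (g • x) = g • bar x)
    (hfaithful : ∀ g : G, (∀ x : D, g • x = x) → (∀ v : V, g • v = v) → g = 1)
    (E : Set (Sym2 D)) (hE : E = {e : Sym2 D | ∃ x : D, e = Sym2.mk x (bar x)})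
    (hconn : ∀ u v : V, Relation.ReflTransGen
      (fun a b : V => ∃ x : D, I x = a ∧ I (bar x) = b) u v)
    (Einv : Set (Sym2 D))
    (hEinv : Einv = {e : Sym2 D | e ∈ E ∧ ∃ x ∈ e, ∃ g : G, g • x = bar x})
    (hharmonic : ∀ (g : G) (x : D), g • x = x → g = 1)
    (g gQ : ℤ)
    (hg : g = 1 - (Nat.card V : ℤ) + (Nat.card E : ℤ))
    (hgQ : gQ = 1 - (Nat.card {s : Set V | ∃ v : V, s = MulAction.orbit G v} : ℤ) + (Nat.card {s : Set (Sym2 D) | ∃ e ∈ (E \ Einv), s = {e' : Sym2 D | ∃ g : G, Sym2.map (fun y => g • y) e = e'}} : ℤ)) :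
    g - 1 = (Nat.card G : ℤ) * (gQ - 1)
      + (∑ᶠ v : V, ((Nat.card (MulAction.stabilizer G v) : ℤ) - 1))
      + (Nat.card Einv : ℤ) := by
  classical
  subst hg hgQ
  have hsub : Einv ⊆ E := by rw [hEinv]; intro e he; exact he.1
  letI : SMul G (Sym2 D) := ⟨fun g e => Sym2.map (fun y => g • y) e⟩
  letI : MulAction G (Sym2 D) :=
    { one_smul := fun e => by
        show Sym2.map (fun y => (1 : G) • y) e = e
        simp
      mul_smul := fun g h e => by
        show Sym2.map (fun y => (g * h) • y) e
          = Sym2.map (fun y => g • y) (Sym2.map (fun y => h • y) e)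
        rw [Sym2.map_map]
        congr 1
        funext y
        exact mul_smul g h y }
  haveI : Fintype (Sym2 D) := Fintype.ofFinite _
  have hcoe : ∀ (g : G) (e : Sym2 D), g • e = Sym2.map (fun y => g • y) e := fun _ _ => rfl
  have horb : ∀ e : Sym2 D, {e' : Sym2 D | ∃ g : G, Sym2.map (fun y => g • y) e = e'}
      = MulAction.orbit G e := fun e => rfl
  have hEmk : ∀ x : D, Sym2.mk x (bar x) ∈ E := fun x => by rw [hE]; exact ⟨x, rfl⟩
  have hsmul_mk : ∀ (g : G) (x : D),
      g • Sym2.mk x (bar x) = Sym2.mk (g • x) (bar (g • x)) := by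
    intro g x
    rw [hcoe, Sym2.map_pair_eq, hbar_equiv]
  have hEinvar : ∀ (g : G) (e : Sym2 D), e ∈ E → g • e ∈ E := by
    intro g e he
    rw [hE] at he ⊢
    obtain ⟨x, rfl⟩ := he
    exact ⟨g • x, hsmul_mk g x⟩
  have hInvBack : ∀ (g : G) (e : Sym2 D), e ∈ E → g • e ∈ Einv → e ∈ Einv := by
    intro g e heE hin
    rw [hEinv] at hin ⊢
    obtain ⟨-, y, hy, h, hh⟩ := hin
    rw [hcoe] at hy
    obtain ⟨x, hx, rfl⟩ := Sym2.mem_map.mp hy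
    refine ⟨heE, x, hx, g⁻¹ * h * g, ?_⟩
    calc (g⁻¹ * h * g) • x = g⁻¹ • (h • (g • x)) := by rw [mul_smul, mul_smul]
      _ = g⁻¹ • bar (g • x) := by rw [hh]
      _ = bar (g⁻¹ • (g • x)) := (hbar_equiv g⁻¹ _).symm
      _ = bar x := by rw [inv_smul_smul]
  have hAinv : ∀ (g : G) (e : Sym2 D), e ∈ E \ Einv → g • e ∈ E \ Einv := by
    intro g e he
    exact ⟨hEinvar g e he.1, fun hcon => he.2 (hInvBack g e he.1 hcon)⟩
  have hAfree : ∀ (g : G) (e : Sym2 D), e ∈ E \ Einv → g • e = e → g = 1 := by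
    intro g e he hfix
    obtain ⟨heE, heI⟩ := he
    rw [hE] at heE
    obtain ⟨x, rfl⟩ := heE
    rw [hsmul_mk] at hfix
    rcases Sym2.eq_iff.mp hfix with ⟨h1, -⟩ | ⟨h1, -⟩
    · exact hharmonic g x h1
    · exfalso
      apply heI
      rw [hEinv]
      exact ⟨hEmk x, x, Sym2.mem_mk_left x (bar x), g, h1⟩
  have hedge := aux_card_free_subset G (Sym2 D) (E \ Einv) hAinv hAfree
  have hsetS : {s : Set (Sym2 D) | ∃ e ∈ (E \ Einv),
        s = {e' : Sym2 D | ∃ g : G, Sym2.map (fun y => g • y) e = e'}}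
      = {s : Set (Sym2 D) | ∃ e ∈ (E \ Einv), s = MulAction.orbit G e} := by
    simp only [horb]
  have hsplit : Nat.card ↥(E \ Einv) + Nat.card ↥Einv = Nat.card ↥E := by
    rw [Nat.card_coe_set_eq, Nat.card_coe_set_eq, Nat.card_coe_set_eq]
    exact Set.ncard_diff_add_ncard_of_subset hsub
  have hV1 := aux_card_orbitSets G V
  have hV2 := aux_sum_stab G V
  have hfin : (∑ᶠ v : V, ((Nat.card (MulAction.stabilizer G v) : ℤ) - 1))
      = (∑ v : V, (Nat.card (MulAction.stabilizer G v) : ℤ)) - (Nat.card V : ℤ) := by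
    rw [finsum_eq_sum_of_fintype, Finset.sum_sub_distrib]
    simp [Nat.card_eq_fintype_card]
  rw [hfin, hsetS]
  have e1 : ((Nat.card ↥(E \ Einv) : ℤ))
      = (Nat.card {s : Set (Sym2 D) | ∃ e ∈ (E \ Einv), s = MulAction.orbit G e} : ℤ)
        * (Nat.card G : ℤ) := by exact_mod_cast hedge
  have e2 : (Nat.card ↥(E \ Einv) : ℤ) + (Nat.card ↥Einv : ℤ) = (Nat.card ↥E : ℤ) := by
    exact_mod_cast hsplit
  have e3 : (∑ v : V, (Nat.card (MulAction.stabilizer G v) : ℤ))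
      = (Nat.card (MulAction.orbitRel.Quotient G V) : ℤ) * (Nat.card G : ℤ) := by
    exact_mod_cast hV2
  have e4 : (Nat.card {s : Set V | ∃ v : V, s = MulAction.orbit G v} : ℤ)
      = (Nat.card (MulAction.orbitRel.Quotient G V) : ℤ) := by exact_mod_cast hV1
  rw [e4]
  linear_combination e1 - e2 - e3
end

section
/- Let X be a finite connected graph of genus g and let G be a finite group acting on X, possibly with invertible edges. Define the factor graph with loops (X/G)_loop whose vertices are the G-orbits of V(X) and whose edges are the G-orbits of E(X) (invertible edges mapping to loops), with genus g(X/G)_loop = 1 − #(G-orbits on V(X)) + #(G-orbits on E(X)). Then g − 1 = |G|·(g(X/G)_loop − 1) + Σ_{v ∈ V(X)} (|G^v| − 1) − Σ_{e ∈ E(X)} (|G^{e}| − 1), where G^{e} is the setwise stabiliser of the two-element set e. -/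
open MulAction

/-- Double counting: sum of stabilizer cardinalities equals number of orbits times `|G|`. -/
lemma sum_natCard_stabilizer {G S : Type} [Group G] [Fintype G] [Fintype S] [MulAction G S] :
    ∑ s : S, Nat.card (MulAction.stabilizer G s) =
      Nat.card (Quotient (MulAction.orbitRel G S)) * Nat.card G := by
  classical
  rw [Nat.card_eq_fintype_card, Nat.card_eq_fintype_card,
    ← MulAction.sum_card_fixedBy_eq_card_orbits_mul_card_group G S]
  have h1 : ∀ s : S, Nat.card (MulAction.stabilizer G s) =
      (Finset.univ.filter (fun g : G => g • s = s)).card := by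
    intro s
    rw [Nat.card_eq_fintype_card, ← Fintype.card_subtype]
    exact Fintype.card_congr (Equiv.subtypeEquivRight fun g => MulAction.mem_stabilizer_iff)
  have h2 : ∀ g : G, Fintype.card (MulAction.fixedBy S g) =
      (Finset.univ.filter (fun s : S => g • s = s)).card := by
    intro g
    rw [← Fintype.card_subtype]
    exact Fintype.card_congr (Equiv.subtypeEquivRight fun s => Iff.rfl)
  simp only [h1, h2, Finset.card_filter]
  exact Finset.sum_comm

/-- The set of orbit-sets is in bijection with the quotient by the orbit relation. -/
lemma natCard_orbitSet {G S : Type} [Group G] [MulAction G S] :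
    Nat.card {s : Set S | ∃ v : S, s = MulAction.orbit G v} =
      Nat.card (Quotient (MulAction.orbitRel G S)) := by
  symm
  apply Nat.card_congr
  refine Equiv.ofBijective
    (Quotient.lift (fun v => (⟨MulAction.orbit G v, v, rfl⟩ :
      {s : Set S | ∃ v : S, s = MulAction.orbit G v})) ?_) ⟨?_, ?_⟩
  · intro a b hab
    exact Subtype.ext (MulAction.orbit_eq_iff.mpr ((MulAction.orbitRel_apply).mp hab))
  · intro a b
    induction a using Quotient.ind
    induction b using Quotient.ind
    intro h
    exact Quotient.sound ((MulAction.orbitRel_apply).mpr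
      (MulAction.orbit_eq_iff.mp (Subtype.ext_iff.mp h)))
  · rintro ⟨s, v, rfl⟩
    exact ⟨⟦v⟧, rfl⟩

/-- Edge version: for a `G`-invariant subset `E`, the sum of (ambient) stabilizer cardinalities
over `E` equals the number of orbit-sets times `|G|`. -/
lemma sum_natCard_stabilizer_invariant {G T : Type} [Group G] [Fintype G] [Fintype T]
    [MulAction G T] (E : Set T) [Fintype E] (hinv : ∀ (g : G), ∀ e ∈ E, g • e ∈ E) :
    ∑ e : E, Nat.card {g : G | g • (e : T) = (e : T)} =
      Nat.card {s : Set T | ∃ e ∈ E, s = {e' : T | ∃ g : G, g • e = e'}} * Nat.card G := by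
  classical
  letI : MulAction G E :=
    { smul := fun g e => ⟨g • (e : T), hinv g e e.2⟩
      one_smul := fun e => Subtype.ext (one_smul G (e : T))
      mul_smul := fun g h e => Subtype.ext (mul_smul g h (e : T)) }
  have hs : ∀ (g : G) (e : E), ((g • e : E) : T) = g • (e : T) := fun _ _ => rfl
  have h1 : ∀ e : E, Nat.card {g : G | g • (e : T) = (e : T)} =
      Nat.card (MulAction.stabilizer G e) := by
    intro e
    apply Nat.card_congr
    exact Equiv.subtypeEquivRight fun g => by
      simp only [Set.mem_setOf_eq, MulAction.mem_stabilizer_iff, Subtype.ext_iff, hs]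
  have horb : ∀ e : E, {e' : T | ∃ g : G, g • (e : T) = e'} = MulAction.orbit G (e : T) := by
    intro e
    ext e'
    simp [MulAction.mem_orbit_iff]
  have hset : {s : Set T | ∃ e ∈ E, s = {e' : T | ∃ g : G, g • e = e'}} =
      {s : Set T | ∃ e ∈ E, s = MulAction.orbit G e} := by
    ext s
    constructor
    · rintro ⟨e, he, rfl⟩; exact ⟨e, he, (horb ⟨e, he⟩).symm.trans rfl ▸ rfl⟩
    · rintro ⟨e, he, rfl⟩; exact ⟨e, he, (horb ⟨e, he⟩).symm⟩
  simp only [h1, hset]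
  rw [sum_natCard_stabilizer]
  congr 1
  apply Nat.card_congr
  refine Equiv.ofBijective
    (Quotient.lift (fun e : E => (⟨MulAction.orbit G (e : T), e, e.2, rfl⟩ :
      {s : Set T | ∃ e ∈ E, s = MulAction.orbit G e})) ?_) ⟨?_, ?_⟩
  · intro a b hab
    obtain ⟨g, hg⟩ := MulAction.mem_orbit_iff.mp ((MulAction.orbitRel_apply).mp hab)
    refine Subtype.ext (MulAction.orbit_eq_iff.mpr (MulAction.mem_orbit_iff.mpr ⟨g, ?_⟩))
    exact (hs g b) ▸ congrArg Subtype.val hg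
  · intro a b
    induction a using Quotient.ind with | _ a =>
    induction b using Quotient.ind with | _ b =>
    intro h
    obtain ⟨g, hg⟩ := MulAction.mem_orbit_iff.mp
      (MulAction.orbit_eq_iff.mp (Subtype.ext_iff.mp h))
    exact Quotient.sound ((MulAction.orbitRel_apply).mpr
      (MulAction.mem_orbit_iff.mpr ⟨g, Subtype.ext ((hs g b).trans hg)⟩))
  · rintro ⟨s, e, he, rfl⟩
    exact ⟨⟦⟨e, he⟩⟧, rfl⟩

/-- A finite graph `X = (D, V; I, bar)`: `D` the darts, `V` the vertices,
`I` the incidence function, `bar` the fixed-point-free dart-reversing involution.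
A finite group `G` acts on `X` via automorphisms (equivariantly and faithfully).
The edge set `E` consists of the unordered pairs `{x, bar x}`. -/
theorem riemann_hurwitz_loop
    {V D G : Type} [Fintype V] [Fintype D] [Nonempty V]
    [Group G] [Fintype G] [MulAction G D] [MulAction G V]
    (I : D → V) (bar : D → D)
    (hbar_invol : ∀ x : D, bar (bar x) = x)
    (hbar_nofix : ∀ x : D, bar x ≠ x)
    (hI_equiv : ∀ (g : G) (x : D), I (g • x) = g • I x)
    (hbar_equiv : ∀ (g : G) (x : D), bar (g • x) = g • bar x)
    (hfaithful : ∀ g : G, (∀ x : D, g • x = x) → (∀ v : V, g • v = v) → g = 1)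
    (E : Set (Sym2 D)) (hE : E = {e : Sym2 D | ∃ x : D, e = Sym2.mk x (bar x)})
    (hconn : ∀ u v : V, Relation.ReflTransGen
      (fun a b : V => ∃ x : D, I x = a ∧ I (bar x) = b) u v)
    (g gQ : ℤ)
    (hg : g = 1 - (Nat.card V : ℤ) + (Nat.card E : ℤ))
    (hgQ : gQ = 1 - (Nat.card {s : Set V | ∃ v : V, s = MulAction.orbit G v} : ℤ) + (Nat.card {s : Set (Sym2 D) | ∃ e ∈ E, s = {e' : Sym2 D | ∃ g : G, Sym2.map (fun y => g • y) e = e'}} : ℤ)) :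
    g - 1 = (Nat.card G : ℤ) * (gQ - 1)
      + (∑ᶠ v : V, ((Nat.card (MulAction.stabilizer G v) : ℤ) - 1))
      - (∑ᶠ e ∈ E, ((Nat.card {g : G | Sym2.map (fun y => g • y) e = e} : ℤ) - 1)) := by
  classical
  -- action of `G` on `Sym2 D`
  letI : MulAction G (Sym2 D) :=
    { smul := fun g e => Sym2.map (fun y => g • y) e
      one_smul := fun e => by
        show Sym2.map _ e = e
        simp only [one_smul]
        exact congrFun Sym2.map_id e
      mul_smul := fun g h e => by
        show Sym2.map _ e = Sym2.map _ (Sym2.map _ e)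
        rw [Sym2.map_map]
        congr 1
        funext y
        simp [mul_smul] }
  have hsmul : ∀ (g' : G) (e : Sym2 D), g' • e = Sym2.map (fun y => g' • y) e := fun _ _ => rfl
  -- E is G-invariant
  have hinv : ∀ (g' : G), ∀ e ∈ E, g' • e ∈ E := by
    intro g' e he
    rw [hE] at he ⊢
    obtain ⟨x, rfl⟩ := he
    exact ⟨g' • x, by simp [hsmul, Sym2.map_pair_eq, hbar_equiv]⟩
  -- vertex sum
  have hV : (∑ᶠ v : V, ((Nat.card (MulAction.stabilizer G v) : ℤ) - 1)) =
      (Nat.card G : ℤ) * (Nat.card {s : Set V | ∃ v : V, s = MulAction.orbit G v} : ℤ)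
        - (Nat.card V : ℤ) := by
    have h := sum_natCard_stabilizer (G := G) (S := V)
    rw [← natCard_orbitSet (G := G) (S := V)] at h
    rw [finsum_eq_sum_of_fintype, Finset.sum_sub_distrib, ← Nat.cast_sum, h]
    push_cast
    simp only [Finset.sum_const, Finset.card_univ, nsmul_eq_mul, mul_one,
      Nat.card_eq_fintype_card]
    ring
  -- edge sum
  have hEsum : (∑ᶠ e ∈ E, ((Nat.card {g : G | Sym2.map (fun y => g • y) e = e} : ℤ) - 1)) =
      (Nat.card G : ℤ) * (Nat.card {s : Set (Sym2 D) | ∃ e ∈ E,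
        s = {e' : Sym2 D | ∃ g : G, Sym2.map (fun y => g • y) e = e'}} : ℤ)
        - (Nat.card E : ℤ) := by
    have h := sum_natCard_stabilizer_invariant (G := G) (T := Sym2 D) E hinv
    simp only [hsmul] at h
    rw [← finsum_set_coe_eq_finsum_mem, finsum_eq_sum_of_fintype, Finset.sum_sub_distrib,
      ← Nat.cast_sum, h]
    push_cast
    simp only [Finset.sum_const, Finset.card_univ, nsmul_eq_mul, mul_one,
      Nat.card_eq_fintype_card]
    ring
  rw [hg, hgQ, hV, hEsum]
  ring
end

section
/- Let X be a finite connected graph of genus g and let G be a finite group acting on X freely on the set of darts and without invertible edges. Let g(X/G) = 1 − #(G-orbits on V(X)) + #(G-orbits on E(X)) be the genus of the factor graph X/G. Then g − 1 = |G|·(g(X/G) − 1) + Σ_{v ∈ V(X)} (|G^v| − 1). -/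
open MulAction

section Aux

variable {G : Type} [Group G]

noncomputable def rhOrbitSetsEquiv (α : Type) [MulAction G α] :
    orbitRel.Quotient G α ≃ {s : Set α // ∃ a : α, s = orbit G a} := by
  refine Equiv.ofBijective
    (fun q => ⟨q.orbit, Quotient.out q, orbitRel.Quotient.orbit_eq_orbit_out q Quotient.out_eq'⟩)
    ⟨fun q q' h => orbitRel.Quotient.orbit_injective (congrArg Subtype.val h), ?_⟩
  rintro ⟨s, a, rfl⟩
  exact ⟨Quotient.mk'' a, Subtype.ext (orbitRel.Quotient.orbit_mk a)⟩

lemma rh_sum_card_stabilizer (α : Type) [MulAction G α] [Fintype α] [Fintype G] :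
    ∑ a : α, Nat.card (stabilizer G a)
      = Nat.card G * Nat.card {s : Set α // ∃ a : α, s = orbit G a} := by
  classical
  have h1 : ∀ a : α, Nat.card (stabilizer G a)
      = (Finset.univ.filter fun g : G => g • a = a).card := by
    intro a
    rw [Nat.card_eq_fintype_card, Fintype.card_subtype]
    congr 1
  have h2 : ∀ g : G, Fintype.card (fixedBy α g)
      = (Finset.univ.filter fun a : α => g • a = a).card := by
    intro g
    rw [Fintype.card_subtype]
    congr 1
  have key := MulAction.sum_card_fixedBy_eq_card_orbits_mul_card_group G α
  have hΩ : Nat.card {s : Set α // ∃ a : α, s = orbit G a}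
      = Fintype.card (Quotient (orbitRel G α)) := by
    rw [← Nat.card_congr (rhOrbitSetsEquiv α), Nat.card_eq_fintype_card]
  calc ∑ a : α, Nat.card (stabilizer G a)
      = ∑ a : α, ∑ g : G, if g • a = a then 1 else 0 := by
        simp only [h1, Finset.card_filter]
    _ = ∑ g : G, ∑ a : α, if g • a = a then 1 else 0 := Finset.sum_comm
    _ = ∑ g : G, Fintype.card (fixedBy α g) := by
        simp only [h2, Finset.card_filter]
    _ = Fintype.card (Quotient (orbitRel G α)) * Fintype.card G := key
    _ = Nat.card G * Nat.card {s : Set α // ∃ a : α, s = orbit G a} := by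
        rw [hΩ, Nat.card_eq_fintype_card, mul_comm]

lemma rh_free_card {β : Type} [MulAction G β] (s : Set β)
    (hinv : ∀ (g : G), ∀ b ∈ s, g • b ∈ s)
    (hfree : ∀ (g : G), ∀ b ∈ s, g • b = b → g = 1) :
    Nat.card s = Nat.card G * Nat.card {t : Set β // ∃ b ∈ s, t = orbit G b} := by
  classical
  set T := {t : Set β // ∃ b ∈ s, t = orbit G b} with hT
  have hrep : ∀ t : T, ∃ b ∈ s, (t : Set β) = orbit G b := fun t => t.2
  choose r hr horb using hrep
  have hbij : Function.Bijective
      (fun p : T × G => (⟨p.2 • r p.1, hinv _ _ (hr p.1)⟩ : s)) := by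
    constructor
    · rintro ⟨t, g⟩ ⟨t', g'⟩ h
      have h' : g • r t = g' • r t' := by
        simpa using congrArg Subtype.val h
      have htt : t = t' := by
        have hmem : r t' ∈ orbit G (r t) :=
          ⟨g'⁻¹ * g, by show (g'⁻¹ * g) • r t = r t'; rw [mul_smul, h', inv_smul_smul]⟩
        have horbeq : orbit G (r t) = orbit G (r t') := (orbit_eq_iff.mpr hmem).symm
        exact Subtype.ext (by rw [horb t, horb t', horbeq])
      subst htt
      have hfix : (g'⁻¹ * g) • r t = r t := by rw [mul_smul, h', inv_smul_smul]
      have h1 : g'⁻¹ * g = 1 := hfree _ _ (hr t) hfix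
      have : g' = g := inv_mul_eq_one.mp h1
      simp [this]
    · rintro ⟨b, hb⟩
      have ht : ∃ b' ∈ s, orbit G b = orbit G b' := ⟨b, hb, rfl⟩
      set t : T := ⟨orbit G b, ht⟩ with hdef
      have hbmem : b ∈ orbit G (r t) := by
        have := horb t
        rw [hdef] at this
        exact this ▸ mem_orbit_self b
      obtain ⟨g, hg⟩ := hbmem
      exact ⟨(t, g), Subtype.ext hg⟩
  have hcard : Nat.card (T × G) = Nat.card s := Nat.card_congr (Equiv.ofBijective _ hbij)
  rw [← hcard, Nat.card_prod, mul_comm]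

end Aux
instance rhSym2MulAction {G α : Type} [Group G] [MulAction G α] :
    MulAction G (Sym2 α) where
  smul g e := Sym2.map (fun y => g • y) e
  one_smul e := by
    show Sym2.map _ e = e
    have h : (fun y : α => (1 : G) • y) = id := funext fun y => one_smul G y
    rw [h, Sym2.map_id, id]
  mul_smul g h e := by
    show Sym2.map _ e = Sym2.map _ (Sym2.map _ e)
    rw [Sym2.map_map]
    congr 1
    funext y
    simp [mul_smul]

example {G α : Type} [Group G] [MulAction G α] (g : G) (e : Sym2 α) :
    g • e = Sym2.map (fun y => g • y) e := rfl

example {G α : Type} [Group G] [MulAction G α] (e : Sym2 α) :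
    MulAction.orbit G e = {e' : Sym2 α | ∃ g : G, Sym2.map (fun y => g • y) e = e'} := rfl

/-- A finite graph `X = (D, V; I, bar)`: `D` the darts, `V` the vertices,
`I` the incidence function, `bar` the fixed-point-free dart-reversing involution.
A finite group `G` acts on `X` via automorphisms (equivariantly and faithfully).
The edge set `E` consists of the unordered pairs `{x, bar x}`. -/
theorem riemann_hurwitz_free_action_no_invertible_edges
    {V D G : Type} [Fintype V] [Fintype D] [Nonempty V]
    [Group G] [Fintype G] [MulAction G D] [MulAction G V]
    (I : D → V) (bar : D → D)
    (hbar_invol : ∀ x : D, bar (bar x) = x)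
    (hbar_nofix : ∀ x : D, bar x ≠ x)
    (hI_equiv : ∀ (g : G) (x : D), I (g • x) = g • I x)
    (hbar_equiv : ∀ (g : G) (x : D), bar (g • x) = g • bar x)
    (hfaithful : ∀ g : G, (∀ x : D, g • x = x) → (∀ v : V, g • v = v) → g = 1)
    (E : Set (Sym2 D)) (hE : E = {e : Sym2 D | ∃ x : D, e = Sym2.mk x (bar x)})
    (hconn : ∀ u v : V, Relation.ReflTransGen
      (fun a b : V => ∃ x : D, I x = a ∧ I (bar x) = b) u v)
    (hfree : ∀ (g : G) (x : D), g • x = x → g = 1)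
    (hnoinv : ∀ (x : D) (g : G), g • x ≠ bar x)
    (g gQ : ℤ)
    (hg : g = 1 - (Nat.card V : ℤ) + (Nat.card E : ℤ))
    (hgQ : gQ = 1 - (Nat.card {s : Set V | ∃ v : V, s = MulAction.orbit G v} : ℤ) + (Nat.card {s : Set (Sym2 D) | ∃ e ∈ E, s = {e' : Sym2 D | ∃ g : G, Sym2.map (fun y => g • y) e = e'}} : ℤ)) :
    g - 1 = (Nat.card G : ℤ) * (gQ - 1)
      + (∑ᶠ v : V, ((Nat.card (MulAction.stabilizer G v) : ℤ) - 1)) := by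
  classical
  -- `E` is invariant and the action on it is free
  have hEinv : ∀ (γ : G), ∀ e ∈ E, γ • e ∈ E := by
    intro γ e he
    rw [hE] at he ⊢
    obtain ⟨x, rfl⟩ := he
    refine ⟨γ • x, ?_⟩
    show Sym2.map (fun y => γ • y) (Sym2.mk x (bar x)) = _
    rw [Sym2.map_pair_eq, hbar_equiv]
  have hEfree : ∀ (γ : G), ∀ e ∈ E, γ • e = e → γ = 1 := by
    intro γ e he hfix
    rw [hE] at he
    obtain ⟨x, rfl⟩ := he
    have hfix' : Sym2.mk (γ • x) (γ • bar x) = Sym2.mk x (bar x) := by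
      have h0 : Sym2.map (fun y => γ • y) (Sym2.mk x (bar x)) = Sym2.mk x (bar x) := hfix
      rwa [Sym2.map_pair_eq] at h0
    rcases Sym2.eq_iff.mp hfix' with ⟨h1, _⟩ | ⟨h1, _⟩
    · exact hfree γ x h1
    · exact absurd h1 (hnoinv x γ)
  have hEcard : Nat.card E
      = Nat.card G * Nat.card {t : Set (Sym2 D) // ∃ b ∈ E, t = MulAction.orbit G b} :=
    rh_free_card E hEinv hEfree
  have hEorb : Nat.card {s : Set (Sym2 D) | ∃ e ∈ E, s = {e' : Sym2 D | ∃ g : G, Sym2.map (fun y => g • y) e = e'}}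
      = Nat.card {t : Set (Sym2 D) // ∃ b ∈ E, t = MulAction.orbit G b} := rfl
  have hVsum : ∑ v : V, Nat.card (MulAction.stabilizer G v)
      = Nat.card G * Nat.card {s : Set V // ∃ v : V, s = MulAction.orbit G v} :=
    rh_sum_card_stabilizer V
  have hVorb : Nat.card {s : Set V | ∃ v : V, s = MulAction.orbit G v}
      = Nat.card {s : Set V // ∃ v : V, s = MulAction.orbit G v} := rfl
  have hfin : (∑ᶠ v : V, ((Nat.card (MulAction.stabilizer G v) : ℤ) - 1))
      = (∑ v : V, (Nat.card (MulAction.stabilizer G v) : ℤ)) - (Nat.card V : ℤ) := by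
    rw [finsum_eq_sum_of_fintype, Finset.sum_sub_distrib]
    simp [Finset.card_univ, Nat.card_eq_fintype_card]
  have hVsumZ : (∑ v : V, (Nat.card (MulAction.stabilizer G v) : ℤ))
      = (Nat.card G : ℤ) * (Nat.card {s : Set V // ∃ v : V, s = MulAction.orbit G v} : ℤ) := by
    rw [← Nat.cast_sum]
    exact_mod_cast congrArg (Nat.cast : ℕ → ℤ) hVsum
  rw [hg, hgQ, hfin, hVsumZ, hVorb, hEorb]
  have hEZ : (Nat.card E : ℤ) = (Nat.card G : ℤ)
      * (Nat.card {t : Set (Sym2 D) // ∃ b ∈ E, t = MulAction.orbit G b} : ℤ) := by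
    exact_mod_cast congrArg (Nat.cast : ℕ → ℤ) hEcard
  rw [hEZ]
  ring
end
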